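/- A triangulation of a connected closed surface is z-knotted (contains exactly one zigzag up to reversal) if and only if it is locally z-knotted in every face, i.e., for every face F the set Z(F) consists of exactly two mutually reversed zigzags. -/

import Mathlib

open Finset

/-- A (combinatorial) triangulation of a connected closed surface:
a finite set of triangular faces such that every edge lies in exactly two
faces, two distinct faces meet in at most an edge, and the dual graph is
connected. -/
structure Triangulation (V : Type) [Fintype V] [DecidableEq V] where
  faces : Finset (Finset V)
  faces_nonempty : faces.Nonempty
  card_eq : ∀ F ∈ faces, F.card = 3
  edge_two_faces : ∀ e : Finset V, e.card = 2 → (∃ F ∈ faces, e ⊆ F) →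
      (faces.filter fun F => e ⊆ F).card = 2
  inter_le : ∀ F ∈ faces, ∀ F' ∈ faces, F ≠ F' → (F ∩ F').card ≤ 2
  connected : ∀ F ∈ faces, ∀ F' ∈ faces,
      Relation.ReflTransGen
        (fun A B => A ∈ faces ∧ B ∈ faces ∧ (A ∩ B).card = 2) F F'

namespace Triangulation

variable {V : Type} [Fintype V] [DecidableEq V] (T : Triangulation V)

/-- `e` is an edge of the triangulation. -/
def IsEdge (e : Finset V) : Prop := e.card = 2 ∧ ∃ F ∈ T.faces, e ⊆ F

/-- A zigzag sequence: consecutive edges are adjacent (distinct, sharing a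
vertex and a face), the faces containing consecutive pairs are distinct, and
edges two apart are disjoint. -/
def IsZigzagSeq (f : ℕ → Finset V) : Prop :=
  (∀ i, T.IsEdge (f i)) ∧
  (∀ i, f i ≠ f (i + 1) ∧ (f i ∩ f (i + 1)).Nonempty ∧
      ∃ F ∈ T.faces, f i ⊆ F ∧ f (i + 1) ⊆ F) ∧
  (∀ i, ∀ F ∈ T.faces, ∀ F' ∈ T.faces,
      f i ⊆ F → f (i + 1) ⊆ F → f (i + 1) ⊆ F' → f (i + 2) ⊆ F' → F ≠ F') ∧
  (∀ i, f i ∩ f (i + 2) = ∅)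

/-- A zigzag: a zigzag sequence together with its (minimal) period. -/
structure Zigzag where
  seq : ℕ → Finset V
  period : ℕ
  period_pos : 0 < period
  periodic : ∀ i, seq (i + period) = seq i
  period_min : ∀ m, 0 < m → (∀ i, seq (i + m) = seq i) → period ≤ m
  isZigzag : T.IsZigzagSeq seq

variable {T}

/-- Two zigzags are the same cyclic sequence (up to a shift). -/
def Zigzag.Equiv (Z Z' : T.Zigzag) : Prop := ∃ k, ∀ i, Z'.seq i = Z.seq (i + k)

/-- `Z'` is the reversal of `Z` (up to a shift). -/
def Zigzag.IsReverseOf (Z' Z : T.Zigzag) : Prop :=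
  ∃ k, ∀ i, Z'.seq i = Z.seq (k + Z.period - i % Z.period)

/-- The zigzag `Z` contains an edge of the face `F`. -/
def Zigzag.Meets (Z : T.Zigzag) (F : Finset V) : Prop := ∃ i, Z.seq i ⊆ F

/-- `F` is the `i`-th face of the face shadow of `Z`, i.e. the face containing
the `i`-th and `(i+1)`-st edges of `Z`. -/
def Zigzag.ShadowAt (Z : T.Zigzag) (i : ℕ) (F : Finset V) : Prop :=
  F ∈ T.faces ∧ Z.seq i ⊆ F ∧ Z.seq (i + 1) ⊆ F

/-- At position `i`, the zigzag `Z` traverses the oriented edge from `x`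
to `y` (the head `y` is the vertex shared with the next edge). -/
def Zigzag.Passes (Z : T.Zigzag) (i : ℕ) (x y : V) : Prop :=
  Z.seq i = {x, y} ∧ x ≠ y ∧ y ∈ Z.seq (i + 1)

variable (T)

/-- The triangulation is locally z-knotted in the face `F`:
`𝒵(F) = {Z, Z⁻¹}`. -/
def LocallyZKnotted (F : Finset V) : Prop :=
  (∃ Z : T.Zigzag, Z.Meets F) ∧
  ∀ Z Z' : T.Zigzag, Z.Meets F → Z'.Meets F → Z.Equiv Z' ∨ Z'.IsReverseOf Z

/-- The triangulation is z-knotted: it has exactly one zigzag up to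
reversal. -/
def ZKnotted : Prop :=
  Nonempty T.Zigzag ∧ ∀ Z Z' : T.Zigzag, Z.Equiv Z' ∨ Z'.IsReverseOf Z

/-- The z-monodromy relation of the face `F`: `M_F` sends the oriented edge
`(x,y)` of `F` to the oriented edge `(u,v)` of `F`.  Here `(u,v)` is the first
oriented edge of `F` occurring in the zigzag through `D_F⁻¹(x,y), (x,y)`
after `(x,y)`. -/
def MonodromyRel (F : Finset V) (x y u v : V) : Prop :=
  x ∈ F ∧ y ∈ F ∧
  ∃ Z : T.Zigzag, ∃ i j : ℕ,
    (∃ z, z ∈ F ∧ z ≠ x ∧ z ≠ y ∧ Z.Passes i z x) ∧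
    Z.Passes (i + 1) x y ∧
    i + 1 < j ∧ Z.Passes j u v ∧ u ∈ F ∧ v ∈ F ∧
    (∀ k, i + 1 < k → k < j → ∀ a b, a ∈ F → b ∈ F → ¬ Z.Passes k a b)

/-- The z-monodromy of `F` is the identity (type (M1)). -/
def MFIsId (F : Finset V) : Prop :=
  ∀ x y, x ∈ F → y ∈ F → x ≠ y → T.MonodromyRel F x y x y

/-- The z-monodromy of `F` is `D_F` (type (M2)). -/
def MFIsD (F : Finset V) : Prop :=
  ∀ x y z : V, ({x, y, z} : Finset V) = F → x ≠ y → y ≠ z → x ≠ z →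
    T.MonodromyRel F x y y z

/-- The z-monodromy of `F` is `D_F⁻¹` (type (M5)). -/
def MFIsDInv (F : Finset V) : Prop :=
  ∀ x y z : V, ({x, y, z} : Finset V) = F → x ≠ y → y ≠ z → x ≠ z →
    T.MonodromyRel F x y z x

/-- The z-monodromy of `F` is of type (M3):
`M_F = (-e₁,e₂,e₃)(-e₃,-e₂,e₁)` for a cycle `(e₁,e₂,e₃)` of `D_F`. -/
def MFIsM3 (F : Finset V) : Prop :=
  ∃ x y z : V, ({x, y, z} : Finset V) = F ∧ x ≠ y ∧ y ≠ z ∧ x ≠ z ∧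
    T.MonodromyRel F y x y z ∧ T.MonodromyRel F y z z x ∧
    T.MonodromyRel F z x y x ∧ T.MonodromyRel F x z z y ∧
    T.MonodromyRel F z y x y ∧ T.MonodromyRel F x y x z

/-- The z-monodromy of `F` is of type (M4):
`M_F = (e₁,-e₂)(e₂,-e₁)` with `e₃, -e₃` fixed, for a cycle `(e₁,e₂,e₃)`
of `D_F`. -/
def MFIsM4 (F : Finset V) : Prop :=
  ∃ x y z : V, ({x, y, z} : Finset V) = F ∧ x ≠ y ∧ y ≠ z ∧ x ≠ z ∧
    T.MonodromyRel F x y z y ∧ T.MonodromyRel F z y x y ∧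
    T.MonodromyRel F y z y x ∧ T.MonodromyRel F y x y z ∧
    T.MonodromyRel F z x z x ∧ T.MonodromyRel F x z x z

/-- The dual graph: vertices are faces, adjacent iff they share an edge. -/
def dualGraph : SimpleGraph {F : Finset V // F ∈ T.faces} where
  Adj A B := A ≠ B ∧ ((A : Finset V) ∩ (B : Finset V)).card = 2
  symm := by
    constructor
    intro A B h
    exact ⟨h.1.symm, by rw [Finset.inter_comm]; exact h.2⟩
  loopless := by constructor; intro A h; exact h.1 rfl

end Triangulation


namespace Triangulation

section Aux

variable {V : Type} [Fintype V] [DecidableEq V] (T : Triangulation V)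

lemma inter_card_one {p q : Finset V} (hp : p.card = 2) (hq : q.card = 2)
    (h3 : (p ∪ q).card = 3) : (p ∩ q).card = 1 := by
  have h := Finset.card_union_add_card_inter p q
  omega

lemma face_eq_union {p q F : Finset V} (hF : F ∈ T.faces) (hp : p.card = 2) (hq : q.card = 2)
    (hpq : p ≠ q) (hpF : p ⊆ F) (hqF : q ⊆ F) : F = p ∪ q := by
  have h3F := T.card_eq F hF
  have hsub : p ∪ q ⊆ F := union_subset hpF hqF
  have hi : (p ∩ q).card ≤ 1 := by
    by_contra hcon
    push_neg at hcon
    have h1 : (p ∩ q).card ≤ p.card := Finset.card_le_card inter_subset_left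
    have h2 : p ∩ q = p := Finset.eq_of_subset_of_card_le inter_subset_left (by omega)
    have h3 : p ⊆ q := by rw [← h2]; exact inter_subset_right
    exact hpq (Finset.eq_of_subset_of_card_le h3 (by omega))
  have hcu := Finset.card_union_add_card_inter p q
  have hle : (p ∪ q).card ≤ F.card := Finset.card_le_card hsub
  exact (Finset.eq_of_subset_of_card_le hsub (by omega)).symm

lemma exists_other {e F : Finset V} (he : e.card = 2) (hF : F ∈ T.faces) (heF : e ⊆ F) :
    ∃ G, G ∈ T.faces ∧ e ⊆ G ∧ G ≠ F ∧ ∀ H ∈ T.faces, e ⊆ H → H = F ∨ H = G := by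
  have h2 := T.edge_two_faces e he ⟨F, hF, heF⟩
  have hmem : ∀ H, H ∈ T.faces.filter (fun F => e ⊆ F) ↔ H ∈ T.faces ∧ e ⊆ H :=
    fun H => Finset.mem_filter
  obtain ⟨a, b, hab, hs⟩ := Finset.card_eq_two.mp h2
  have hFs : F ∈ T.faces.filter (fun F => e ⊆ F) := (hmem F).mpr ⟨hF, heF⟩
  have ha : a ∈ T.faces.filter (fun F => e ⊆ F) := by rw [hs]; simp
  have hb : b ∈ T.faces.filter (fun F => e ⊆ F) := by rw [hs]; simp
  have hFs' : F = a ∨ F = b := by rw [hs] at hFs; simpa using hFs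
  have huniq : ∀ H ∈ T.faces, e ⊆ H → H = a ∨ H = b := by
    intro H hH heH
    have : H ∈ T.faces.filter (fun F => e ⊆ F) := (hmem H).mpr ⟨hH, heH⟩
    rw [hs] at this; simpa using this
  rcases hFs' with rfl | rfl
  · exact ⟨b, ((hmem b).mp hb).1, ((hmem b).mp hb).2, fun h => hab h.symm,
      fun H hH heH => huniq H hH heH⟩
  · exact ⟨a, ((hmem a).mp ha).1, ((hmem a).mp ha).2, hab,
      fun H hH heH => (huniq H hH heH).symm⟩

def IsFlag (p q : Finset V) : Prop :=
  p.card = 2 ∧ q.card = 2 ∧ p ≠ q ∧ p ∪ q ∈ T.faces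

noncomputable def nextEdge (p q : Finset V) : Finset V :=
  if h : ∃ G, G ∈ T.faces ∧ q ⊆ G ∧ G ≠ p ∪ q then h.choose \ (p ∩ q) else ∅

noncomputable def prevEdge (p q : Finset V) : Finset V :=
  if h : ∃ G, G ∈ T.faces ∧ p ⊆ G ∧ G ≠ p ∪ q then h.choose \ (p ∩ q) else ∅

lemma step_spec {p q : Finset V} (h : T.IsFlag p q) :
    T.IsFlag q (T.nextEdge p q) ∧ p ∩ T.nextEdge p q = ∅ ∧
    q ∪ T.nextEdge p q ≠ p ∪ q ∧ q ∪ T.nextEdge p q ∈ T.faces ∧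
    q ∩ T.nextEdge p q = q \ (p ∩ q) := by
  obtain ⟨hp, hq, hpq, hF⟩ := h
  have hqF : q ⊆ p ∪ q := subset_union_right
  have hFc : (p ∪ q).card = 3 := T.card_eq _ hF
  obtain ⟨G₀, hG₀1, hG₀2, hG₀3, _⟩ := T.exists_other hq hF hqF
  have hex : ∃ G, G ∈ T.faces ∧ q ⊆ G ∧ G ≠ p ∪ q := ⟨G₀, hG₀1, hG₀2, hG₀3⟩
  obtain ⟨hG1, hG2, hG3⟩ := hex.choose_spec
  have hnext : T.nextEdge p q = hex.choose \ (p ∩ q) := by rw [nextEdge, dif_pos hex]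
  set G := hex.choose with hGdef
  have hGc : G.card = 3 := T.card_eq _ hG1
  have hGF : G ∩ (p ∪ q) = q := by
    refine (Finset.eq_of_subset_of_card_le (subset_inter hG2 hqF) ?_).symm
    have := T.inter_le G hG1 (p ∪ q) hF hG3
    omega
  have hiq : (p ∩ q).card = 1 := inter_card_one hp hq hFc
  have hpqG : p ∩ q ⊆ G := inter_subset_right.trans hG2
  have hnc : (G \ (p ∩ q)).card = 2 := by rw [Finset.card_sdiff_of_subset hpqG]; omega
  have hun : q ∪ G \ (p ∩ q) = G := by
    ext x
    simp only [mem_union, mem_sdiff, mem_inter]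
    constructor
    · rintro (h | ⟨h, _⟩)
      exacts [hG2 h, h]
    · intro hx
      by_cases hxq : x ∈ q
      · exact Or.inl hxq
      · exact Or.inr ⟨hx, fun hc => hxq hc.2⟩
  have hqne : q ≠ G \ (p ∩ q) := by
    obtain ⟨a, ha⟩ := Finset.card_pos.mp (by omega : 0 < (p ∩ q).card)
    intro he
    have haq : a ∈ q := (Finset.mem_inter.mp ha).2
    have : a ∈ G \ (p ∩ q) := he ▸ haq
    exact (Finset.mem_sdiff.mp this).2 ha
  have hpdisj : p ∩ (G \ (p ∩ q)) = ∅ := by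
    ext x
    simp only [mem_inter, mem_sdiff, Finset.notMem_empty, iff_false]
    rintro ⟨hxp, hxG, hn⟩
    refine hn ⟨hxp, ?_⟩
    have hx2 : x ∈ G ∩ (p ∪ q) := Finset.mem_inter.mpr ⟨hxG, Finset.mem_union_left _ hxp⟩
    rw [hGF] at hx2
    exact hx2
  have hqi : q ∩ (G \ (p ∩ q)) = q \ (p ∩ q) := by
    ext x
    simp only [mem_inter, mem_sdiff]
    constructor
    · rintro ⟨h1, _, h3⟩; exact ⟨h1, h3⟩
    · rintro ⟨h1, h3⟩; exact ⟨h1, hG2 h1, h3⟩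
  rw [hnext]
  refine ⟨⟨hq, hnc, hqne, by rw [hun]; exact hG1⟩, hpdisj, by rw [hun]; exact hG3,
    by rw [hun]; exact hG1, hqi⟩

lemma prev_next {p q : Finset V} (h : T.IsFlag p q) : T.prevEdge q (T.nextEdge p q) = p := by
  obtain ⟨hflag, hdisj, hne, hface, hqi⟩ := T.step_spec h
  obtain ⟨hp, hq, hpq, hF⟩ := h
  have hqF : q ⊆ p ∪ q := subset_union_right
  obtain ⟨G₀, hG₀1, hG₀2, hG₀3, huniq⟩ := T.exists_other hq hF hqF
  have hGeq : q ∪ T.nextEdge p q = G₀ := by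
    rcases huniq _ hface subset_union_left with h' | h'
    · exact absurd h' hne
    · exact h'
  have hex : ∃ G, G ∈ T.faces ∧ q ⊆ G ∧ G ≠ q ∪ T.nextEdge p q :=
    ⟨p ∪ q, hF, hqF, fun h' => hne h'.symm⟩
  have hprev : T.prevEdge q (T.nextEdge p q) = hex.choose \ (q ∩ T.nextEdge p q) := by
    rw [prevEdge, dif_pos hex]
  obtain ⟨hH1, hH2, hH3⟩ := hex.choose_spec
  have hHeq : hex.choose = p ∪ q := by
    rcases huniq _ hH1 hH2 with h' | h'
    · exact h'
    · exact absurd (h'.trans hGeq.symm) hH3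
  rw [hprev, hHeq, hqi]
  ext x
  simp only [mem_sdiff, mem_union, mem_inter]
  constructor
  · rintro ⟨h1 | h1, h2⟩
    · exact h1
    · by_contra hxp
      exact h2 ⟨h1, fun hc => hxp hc.1⟩
  · intro hxp
    exact ⟨Or.inl hxp, fun hc => hc.2 ⟨hxp, hc.1⟩⟩

noncomputable def stepFn (pq : Finset V × Finset V) : Finset V × Finset V :=
  (pq.2, T.nextEdge pq.1 pq.2)

noncomputable def prevFn (pq : Finset V × Finset V) : Finset V × Finset V :=
  (T.prevEdge pq.1 pq.2, pq.1)

lemma prev_stepFn {x : Finset V × Finset V} (h : T.IsFlag x.1 x.2) :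
    T.prevFn (T.stepFn x) = x := by
  obtain ⟨p, q⟩ := x
  simp only [stepFn, prevFn, Prod.mk.injEq]
  exact ⟨T.prev_next h, trivial⟩

noncomputable def flagSeq (s : Finset V × Finset V) (n : ℕ) : Finset V × Finset V :=
  (T.stepFn)^[n] s

lemma flagSeq_zero (s : Finset V × Finset V) : T.flagSeq s 0 = s := rfl

lemma flagSeq_succ (s : Finset V × Finset V) (n : ℕ) :
    T.flagSeq s (n + 1) = T.stepFn (T.flagSeq s n) :=
  Function.iterate_succ_apply' _ _ _

lemma flagSeq_flag {s : Finset V × Finset V} (h : T.IsFlag s.1 s.2) (n : ℕ) :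
    T.IsFlag (T.flagSeq s n).1 (T.flagSeq s n).2 := by
  induction n with
  | zero => exact h
  | succ n ih =>
    rw [T.flagSeq_succ]
    exact (T.step_spec ih).1

lemma flagSeq_cancel {s : Finset V × Finset V} (h : T.IsFlag s.1 s.2) :
    ∀ k a b, T.flagSeq s (a + k) = T.flagSeq s (b + k) → T.flagSeq s a = T.flagSeq s b := by
  intro k
  induction k with
  | zero => intro a b hab; simpa using hab
  | succ k ih =>
    intro a b hab
    have h1 : T.flagSeq s (a + k + 1) = T.flagSeq s (b + k + 1) := by
      have e1 : a + (k + 1) = a + k + 1 := by omega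
      have e2 : b + (k + 1) = b + k + 1 := by omega
      rw [e1, e2] at hab
      exact hab
    rw [T.flagSeq_succ, T.flagSeq_succ] at h1
    have h2 := congrArg T.prevFn h1
    rw [T.prev_stepFn (T.flagSeq_flag h (a + k)), T.prev_stepFn (T.flagSeq_flag h (b + k))] at h2
    exact ih a b h2

lemma flagSeq_add (s : Finset V × Finset V) (n m : ℕ) :
    T.flagSeq s (n + m) = (T.stepFn)^[n] (T.flagSeq s m) :=
  Function.iterate_add_apply _ _ _ _

lemma exists_period {s : Finset V × Finset V} (h : T.IsFlag s.1 s.2) :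
    ∃ m, 0 < m ∧ ∀ i, (T.flagSeq s (i + m)).1 = (T.flagSeq s i).1 := by
  obtain ⟨i, j, hne, heq⟩ := Finite.exists_ne_map_eq_of_infinite (T.flagSeq s)
  have key : ∀ i j : ℕ, i < j → T.flagSeq s i = T.flagSeq s j →
      ∃ m, 0 < m ∧ ∀ n, (T.flagSeq s (n + m)).1 = (T.flagSeq s n).1 := by
    intro i j hij heq
    refine ⟨j - i, by omega, fun n => ?_⟩
    have h0 : T.flagSeq s (0 + i) = T.flagSeq s ((j - i) + i) := by
      rw [Nat.zero_add, Nat.sub_add_cancel hij.le]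
      exact heq
    have h0' : T.flagSeq s 0 = T.flagSeq s (j - i) := T.flagSeq_cancel h i 0 (j - i) h0
    have hper : T.flagSeq s (n + (j - i)) = T.flagSeq s n := by
      rw [T.flagSeq_add, ← h0', T.flagSeq_zero]
      rfl
    rw [hper]
  rcases lt_or_gt_of_ne hne with hij | hij
  · exact key i j hij heq
  · exact key j i hij heq.symm

lemma zigzagSeq_of_flag {s : Finset V × Finset V} (h : T.IsFlag s.1 s.2) :
    T.IsZigzagSeq (fun n => (T.flagSeq s n).1) := by
  have e1 : ∀ i, (T.flagSeq s (i + 1)).1 = (T.flagSeq s i).2 := by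
    intro i; rw [T.flagSeq_succ]; rfl
  have e2 : ∀ i, (T.flagSeq s (i + 2)).1 = T.nextEdge (T.flagSeq s i).1 (T.flagSeq s i).2 := by
    intro i
    have h12 : i + 2 = (i + 1) + 1 := rfl
    rw [h12, T.flagSeq_succ, T.flagSeq_succ]
    rfl
  refine ⟨fun i => ?_, fun i => ?_, fun i F hFm F' hF'm h1 h2 h3 h4 => ?_, fun i => ?_⟩
  · obtain ⟨hp, hq, hpq, hF⟩ := T.flagSeq_flag h i
    exact ⟨hp, _, hF, subset_union_left⟩
  · obtain ⟨hp, hq, hpq, hF⟩ := T.flagSeq_flag h i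
    refine ⟨?_, ?_, _, hF, subset_union_left, ?_⟩
    · simp only [e1]; exact hpq
    · simp only [e1]
      have := inter_card_one hp hq (T.card_eq _ hF)
      exact Finset.card_pos.mp (by omega)
    · simp only [e1]; exact subset_union_right
  · obtain ⟨hp, hq, hpq, hF⟩ := T.flagSeq_flag h i
    simp only [e2] at h4
    simp only [e1] at h2 h3
    obtain ⟨⟨hq', hn', hqn', hFn'⟩, _, hne, _, _⟩ := T.step_spec ⟨hp, hq, hpq, hF⟩
    have hF1 : F = (T.flagSeq s i).1 ∪ (T.flagSeq s i).2 :=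
      T.face_eq_union hFm hp hq hpq h1 h2
    have hF2 : F' = (T.flagSeq s i).2 ∪ T.nextEdge (T.flagSeq s i).1 (T.flagSeq s i).2 :=
      T.face_eq_union hF'm hq' hn' hqn' h3 h4
    rw [hF1, hF2]
    exact fun hc => hne hc.symm
  · obtain ⟨hp, hq, hpq, hF⟩ := T.flagSeq_flag h i
    simp only [e2]
    exact (T.step_spec ⟨hp, hq, hpq, hF⟩).2.1

noncomputable def mkZigzag (s : Finset V × Finset V) (h : T.IsFlag s.1 s.2) : T.Zigzag :=
  letI : DecidablePred fun m => 0 < m ∧ ∀ i, (T.flagSeq s (i + m)).1 = (T.flagSeq s i).1 :=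
    fun _ => Classical.propDecidable _
  { seq := fun n => (T.flagSeq s n).1
    period := Nat.find (T.exists_period h)
    period_pos := (Nat.find_spec (T.exists_period h)).1
    periodic := (Nat.find_spec (T.exists_period h)).2
    period_min := fun m hm hp => Nat.find_min' _ ⟨hm, hp⟩
    isZigzag := T.zigzagSeq_of_flag h }

lemma exists_zigzag_flag {p q : Finset V} (h : T.IsFlag p q) :
    ∃ Z : T.Zigzag, Z.seq 0 = p ∧ Z.seq 1 = q := by
  refine ⟨T.mkZigzag (p, q) h, rfl, ?_⟩
  show (T.flagSeq (p, q) 1).1 = q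
  rw [T.flagSeq_succ, T.flagSeq_zero]
  rfl

lemma exists_zigzag_meets {F : Finset V} (hF : F ∈ T.faces) :
    ∃ Z : T.Zigzag, Z.Meets F := by
  obtain ⟨x, y, z, hxy, hxz, hyz, hFxyz⟩ := Finset.card_eq_three.mp (T.card_eq F hF)
  have hun : ({x, y} : Finset V) ∪ {y, z} = F := by
    rw [hFxyz]
    ext w
    simp only [Finset.mem_union, Finset.mem_insert, Finset.mem_singleton]
    tauto
  have hne : ({x, y} : Finset V) ≠ {y, z} := by
    intro he
    have : x ∈ ({y, z} : Finset V) := he ▸ Finset.mem_insert_self x {y}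
    simp only [Finset.mem_insert, Finset.mem_singleton] at this
    tauto
  obtain ⟨Z, hZ0, _⟩ := T.exists_zigzag_flag
    ⟨Finset.card_pair hxy, Finset.card_pair hyz, hne, by rw [hun]; exact hF⟩
  refine ⟨Z, 0, ?_⟩
  rw [hZ0, ← hun]
  exact subset_union_left

end Aux

section Calculus

variable {V : Type} [Fintype V] [DecidableEq V] {T : Triangulation V}

lemma Zigzag.seq_add_mul (Z : T.Zigzag) : ∀ t i, Z.seq (i + Z.period * t) = Z.seq i := by
  intro t
  induction t with
  | zero => simp
  | succ t ih =>
    intro i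
    have e : i + Z.period * (t + 1) = (i + Z.period * t) + Z.period := by ring
    rw [e, Z.periodic, ih]

lemma Zigzag.seq_mod (Z : T.Zigzag) (n : ℕ) : Z.seq n = Z.seq (n % Z.period) := by
  conv_lhs => rw [← Nat.mod_add_div n Z.period]
  exact Z.seq_add_mul _ _

lemma Zigzag.seq_congr (Z : T.Zigzag) {a b : ℕ} (h : a % Z.period = b % Z.period) :
    Z.seq a = Z.seq b := by
  rw [Z.seq_mod a, h, ← Z.seq_mod b]

lemma Zigzag.seq_congr' (Z : T.Zigzag) {a b : ℕ}
    (h : ((a : ℕ) : ZMod Z.period) = (b : ZMod Z.period)) : Z.seq a = Z.seq b :=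
  Z.seq_congr ((ZMod.natCast_eq_natCast_iff a b _).mp h)

lemma cast_sub_mod {p : ℕ} (hp : 0 < p) (a m : ℕ) :
    ((a + p - m % p : ℕ) : ZMod p) = (a : ZMod p) - (m : ZMod p) := by
  have h1 : m % p ≤ a + p := le_trans (Nat.mod_lt _ hp).le (Nat.le_add_left _ _)
  rw [Nat.cast_sub h1]
  push_cast [ZMod.natCast_self, ZMod.natCast_mod]
  ring

lemma cast_psub {p : ℕ} (hp : 0 < p) (k : ℕ) :
    ((p - k % p : ℕ) : ZMod p) = -(k : ZMod p) := by
  have h1 : k % p ≤ p := (Nat.mod_lt _ hp).le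
  rw [Nat.cast_sub h1]
  push_cast [ZMod.natCast_self, ZMod.natCast_mod]
  ring

lemma Zigzag.equiv_refl (Z : T.Zigzag) : Z.Equiv Z :=
  ⟨0, fun i => by rw [Nat.add_zero]⟩

lemma Zigzag.equiv_trans {Z W U : T.Zigzag} (h1 : Z.Equiv W) (h2 : W.Equiv U) : Z.Equiv U := by
  obtain ⟨k1, hk1⟩ := h1
  obtain ⟨k2, hk2⟩ := h2
  exact ⟨k2 + k1, fun i => by rw [hk2, hk1, Nat.add_assoc]⟩

lemma Zigzag.Equiv.period_eq {Z W : T.Zigzag} (h : Z.Equiv W) : W.period = Z.period := by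
  obtain ⟨k, hk⟩ := h
  have hle : W.period ≤ Z.period := by
    apply W.period_min _ Z.period_pos
    intro i
    rw [hk, hk]
    have e : i + Z.period + k = (i + k) + Z.period := by ring
    rw [e, Z.periodic]
  have hge : Z.period ≤ W.period := by
    apply Z.period_min _ W.period_pos
    intro i
    have hjk : k ≤ i + Z.period * k :=
      le_trans (Nat.le_mul_of_pos_left k Z.period_pos) (Nat.le_add_left _ i)
    have h2 : Z.seq (i + Z.period * k + W.period) = Z.seq (i + Z.period * k) := by
      have h3 := hk (i + Z.period * k - k + W.period)
      have h4 := hk (i + Z.period * k - k)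
      have h5 := W.periodic (i + Z.period * k - k)
      rw [h3, h4] at h5
      have f1 : i + Z.period * k - k + W.period + k = i + Z.period * k + W.period := by omega
      have f2 : i + Z.period * k - k + k = i + Z.period * k := by omega
      rw [f1, f2] at h5
      exact h5
    calc Z.seq (i + W.period)
        = Z.seq (i + Z.period * k + W.period) := by
          apply Z.seq_congr
          have e : i + Z.period * k + W.period = (i + W.period) + Z.period * k := by ring
          rw [e, Nat.add_mul_mod_self_left]
      _ = Z.seq (i + Z.period * k) := h2
      _ = Z.seq i := by
          apply Z.seq_congr
          rw [Nat.add_mul_mod_self_left]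
  omega

lemma Zigzag.IsReverseOf.period_eq {W Z : T.Zigzag} (h : W.IsReverseOf Z) :
    W.period = Z.period := by
  obtain ⟨k, hk⟩ := h
  have hp := Z.period_pos
  have hle : W.period ≤ Z.period := by
    apply W.period_min _ hp
    intro i
    rw [hk, hk, Nat.add_mod_right]
  have hge : Z.period ≤ W.period := by
    apply Z.period_min _ W.period_pos
    intro j
    have h5 := W.periodic (k + Z.period - (j + W.period) % Z.period)
    rw [hk, hk] at h5
    have hicast : ((k + Z.period - (j + W.period) % Z.period : ℕ) : ZMod Z.period) =
        (k : ZMod Z.period) - ((j : ZMod Z.period) + (W.period : ZMod Z.period)) := by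
      rw [cast_sub_mod hp k (j + W.period)]
      push_cast
      ring
    have hA : Z.seq (k + Z.period -
        (k + Z.period - (j + W.period) % Z.period + W.period) % Z.period) = Z.seq j := by
      apply Z.seq_congr'
      rw [cast_sub_mod hp k (k + Z.period - (j + W.period) % Z.period + W.period)]
      push_cast [hicast]
      ring
    have hB : Z.seq (k + Z.period -
        (k + Z.period - (j + W.period) % Z.period) % Z.period) = Z.seq (j + W.period) := by
      apply Z.seq_congr'
      rw [cast_sub_mod hp k (k + Z.period - (j + W.period) % Z.period)]
      push_cast [hicast]
      ring
    rw [hA, hB] at h5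
    exact h5.symm
  omega

lemma Zigzag.reverse_of_equiv {Z W U : T.Zigzag} (hzw : Z.Equiv W) (huw : U.IsReverseOf W) :
    U.IsReverseOf Z := by
  have hq : W.period = Z.period := hzw.period_eq
  obtain ⟨k₀, h₀⟩ := hzw
  obtain ⟨k₂, h₂⟩ := huw
  refine ⟨k₂ + k₀, fun i => ?_⟩
  have h2 := h₂ i
  rw [hq] at h2
  rw [h2, h₀]
  congr 1
  have hlt : i % Z.period < Z.period := Nat.mod_lt _ Z.period_pos
  omega

lemma Zigzag.reverse_of_equiv' {Z W U : T.Zigzag} (hwz : W.IsReverseOf Z) (hwu : W.Equiv U) :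
    U.IsReverseOf Z := by
  obtain ⟨k, hk⟩ := hwu
  obtain ⟨k', hk'⟩ := hwz
  have hp := Z.period_pos
  refine ⟨k' + (Z.period - k % Z.period), fun i => ?_⟩
  rw [hk i, hk' (i + k)]
  apply Z.seq_congr'
  rw [cast_sub_mod hp k' (i + k), cast_sub_mod hp (k' + (Z.period - k % Z.period)) i]
  push_cast
  rw [cast_psub hp]
  ring

lemma Zigzag.equiv_of_reverse {Z W U : T.Zigzag} (hwz : W.IsReverseOf Z)
    (huw : U.IsReverseOf W) : Z.Equiv U := by
  have hq : W.period = Z.period := hwz.period_eq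
  obtain ⟨k₁, hk₁⟩ := hwz
  obtain ⟨k₂, hk₂⟩ := huw
  have hp := Z.period_pos
  refine ⟨k₁ + (Z.period - k₂ % Z.period), fun i => ?_⟩
  have h2 := hk₂ i
  rw [hq] at h2
  rw [h2, hk₁]
  apply Z.seq_congr'
  rw [cast_sub_mod hp k₁ (k₂ + Z.period - i % Z.period), cast_sub_mod hp k₂ i]
  push_cast
  rw [cast_psub hp]
  ring

lemma Zigzag.combine {Z W U : T.Zigzag} (h1 : Z.Equiv W ∨ W.IsReverseOf Z)
    (h2 : W.Equiv U ∨ U.IsReverseOf W) : Z.Equiv U ∨ U.IsReverseOf Z := by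
  rcases h1 with h1 | h1 <;> rcases h2 with h2 | h2
  · exact Or.inl (Zigzag.equiv_trans h1 h2)
  · exact Or.inr (Zigzag.reverse_of_equiv h1 h2)
  · exact Or.inr (Zigzag.reverse_of_equiv' h1 h2)
  · exact Or.inl (Zigzag.equiv_of_reverse h1 h2)

end Calculus

end Triangulation

/-- a triangulation is z-knotted iff it is locally z-knotted
in every face. -/
theorem zknotted_iff_locally_zknotted {V : Type} [Fintype V] [DecidableEq V]
    (T : Triangulation V) :
    T.ZKnotted ↔ ∀ F ∈ T.faces, T.LocallyZKnotted F := by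
  constructor
  · rintro ⟨_, huniq⟩ F hF
    obtain ⟨Z, hZ⟩ := T.exists_zigzag_meets hF
    exact ⟨⟨Z, hZ⟩, fun Z₁ Z₂ _ _ => huniq Z₁ Z₂⟩
  · intro hloc
    obtain ⟨F₀, hF₀⟩ := T.faces_nonempty
    obtain ⟨Z₀, _⟩ := T.exists_zigzag_meets hF₀
    refine ⟨⟨Z₀⟩, fun Z Z' => ?_⟩
    obtain ⟨_, A, hA, hZA⟩ := Z.isZigzag.1 0
    obtain ⟨_, B, hB, hZ'B⟩ := Z'.isZigzag.1 0
    have key : ∀ C, Relation.ReflTransGen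
        (fun A B => A ∈ T.faces ∧ B ∈ T.faces ∧ (A ∩ B).card = 2) A C →
        ∃ W : T.Zigzag, W.Meets C ∧ (Z.Equiv W ∨ W.IsReverseOf Z) := by
      intro C hchain
      induction hchain with
      | refl => exact ⟨Z, ⟨0, hZA⟩, Or.inl Z.equiv_refl⟩
      | @tail c C' hsteps hadj ih =>
        obtain ⟨hc, hC', hcard⟩ := hadj
        obtain ⟨W, hWc, hWZ⟩ := ih
        have hcc : c.card = 3 := T.card_eq _ hc
        have hec : c ∩ C' ⊆ c := Finset.inter_subset_left
        obtain ⟨b, hbmem⟩ := Finset.card_pos.mp (by omega : 0 < (c ∩ C').card)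
        have hbc : b ∈ c := hec hbmem
        have hpcard : (c.erase b).card = 2 := by rw [Finset.card_erase_of_mem hbc]; omega
        have hwex : ∃ w, w ∈ c ∧ w ∉ c ∩ C' := by
          by_contra hcon
          push_neg at hcon
          have hsub : c ⊆ c ∩ C' := fun x hx => hcon x hx
          have := Finset.card_le_card hsub
          omega
        obtain ⟨w, hwc, hwe⟩ := hwex
        have hwb : w ≠ b := fun h => hwe (h ▸ hbmem)
        have hpe : c.erase b ≠ c ∩ C' := by
          intro h
          exact hwe (h ▸ Finset.mem_erase.mpr ⟨hwb, hwc⟩)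
        have hun : c.erase b ∪ c ∩ C' = c := by
          ext x
          simp only [Finset.mem_union, Finset.mem_erase]
          constructor
          · rintro (⟨_, h⟩ | h)
            exacts [h, hec h]
          · intro hx
            by_cases hxb : x = b
            · exact Or.inr (hxb ▸ hbmem)
            · exact Or.inl ⟨hxb, hx⟩
        obtain ⟨U, hU0, hU1⟩ := T.exists_zigzag_flag
          ⟨hpcard, hcard, hpe, by rw [hun]; exact hc⟩
        have hUc : U.Meets c := ⟨0, by rw [hU0]; exact Finset.erase_subset _ _⟩
        have hUC' : U.Meets C' := ⟨1, by rw [hU1]; exact Finset.inter_subset_right⟩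
        have h3 := (hloc c hc).2 W U hWc hUc
        exact ⟨U, hUC', Triangulation.Zigzag.combine hWZ h3⟩
    obtain ⟨W, hWB, hWZ⟩ := key B (T.connected A hA B hB)
    exact Triangulation.Zigzag.combine hWZ ((hloc B hB).2 W Z' hWB ⟨0, hZ'B⟩)
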